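/- Let q be a prime power and m ≥ 1, and define N_i(α) := α^{(q^i−1)/(q−1)} for α ∈ F_{q^m} and i ≥ 0. Let α_1, …, α_s ∈ F_{q^m} be such that the s×s matrix with (i, j) entry N_{i−1}(α_j) is invertible. Then for every subset S ⊆ {α_1, …, α_s} of size r, the r×r matrix whose (i, j) entry is N_{i−1}(γ_j), where γ_1, …, γ_r enumerate S, is also invertible. (Equivalently: every subset of a P-independent subset of F_{q^m} is P-independent.) -/

import Mathlib

section Aux

variable {K : Type*} [Field K]

/-- Evaluation of the "P-polynomial" with coefficients `c` (supported below `k`)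
and exponent sequence `d` at a point `x`. -/
def Esum (d : ℕ → ℕ) (k : ℕ) (c : ℕ → K) (x : K) : K :=
  ∑ i ∈ Finset.range k, c i * x ^ d i

lemma Esum_step (p : ℕ) [Fact p.Prime] [CharP K p] (e : ℕ) (q : ℕ) (hqe : q = p ^ e)
    (d : ℕ → ℕ) (hd : ∀ i, d (i + 1) = q * d i + 1)
    (k : ℕ) (c : ℕ → K) (hc0 : ∀ i, k ≤ i → c i = 0) (hcne : ∃ i, c i ≠ 0)
    (β : K) :
    ∃ c' : ℕ → K, (∀ i, k + 1 ≤ i → c' i = 0) ∧ (∃ i, c' i ≠ 0) ∧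
      Esum d (k + 1) c' β = 0 ∧ ∀ x : K, Esum d k c x = 0 → Esum d (k + 1) c' x = 0 := by
  set a : K := Esum d k c β with ha_def
  by_cases ha : a = 0
  · refine ⟨c, fun i hi => hc0 i (by omega), hcne, ?_, ?_⟩
    · have : Esum d (k + 1) c β = Esum d k c β + c k * β ^ d k := by
        simp [Esum, Finset.sum_range_succ]
      rw [this, hc0 k le_rfl, ← ha_def, ha]; ring
    · intro x hx
      have : Esum d (k + 1) c x = Esum d k c x + c k * x ^ d k := by
        simp [Esum, Finset.sum_range_succ]
      rw [this, hc0 k le_rfl, hx]; ring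
  · set b : K := -(β * a ^ q) with hb_def
    set c' : ℕ → K := fun i => (if i = 0 then 0 else a * (c (i - 1)) ^ q) + b * c i with hc'_def
    have key : ∀ x : K, Esum d (k + 1) c' x = a * x * (Esum d k c x) ^ q + b * Esum d k c x := by
      intro x
      have hpow : (Esum d k c x) ^ q = ∑ i ∈ Finset.range k, (c i) ^ q * x ^ (q * d i) := by
        rw [Esum, hqe, sum_pow_char_pow]
        refine Finset.sum_congr rfl fun i _ => ?_
        rw [mul_pow, ← pow_mul, ← hqe, mul_comm (d i) q]
      have h1 : Esum d (k + 1) c' x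
          = (∑ i ∈ Finset.range k, c' (i + 1) * x ^ d (i + 1)) + c' 0 * x ^ d 0 := by
        rw [Esum, Finset.sum_range_succ']
      have h2 : b * Esum d k c x
          = (∑ i ∈ Finset.range k, b * c (i + 1) * x ^ d (i + 1)) + b * c 0 * x ^ d 0 := by
        have : b * Esum d k c x = ∑ i ∈ Finset.range (k + 1), b * c i * x ^ d i := by
          rw [Esum, Finset.mul_sum, Finset.sum_range_succ, hc0 k le_rfl]
          ring_nf
          simp [Finset.mul_sum, mul_assoc]
          exact Finset.sum_congr rfl fun _ _ => by ring
        rw [this, Finset.sum_range_succ']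
      have hterm : ∀ i ∈ Finset.range k, c' (i + 1) * x ^ d (i + 1)
          = a * x * (c i ^ q * x ^ (q * d i)) + b * c (i + 1) * x ^ d (i + 1) := by
        intro i _
        simp only [hc'_def, if_neg (Nat.succ_ne_zero i), Nat.add_sub_cancel, hd i]
        ring
      have hzt : c' 0 * x ^ d 0 = b * c 0 * x ^ d 0 := by
        simp [hc'_def]
      rw [h1, h2, hpow, Finset.mul_sum, Finset.sum_congr rfl hterm, Finset.sum_add_distrib,
        hzt]
      ring
    have hroots : ∀ x : K, Esum d k c x = 0 → Esum d (k + 1) c' x = 0 := by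
      have hq0 : q ≠ 0 := by
        rw [hqe]; exact pow_ne_zero _ (Nat.Prime.ne_zero Fact.out)
      intro x hx; rw [key, hx]; simp [zero_pow hq0]
    have hβ : Esum d (k + 1) c' β = 0 := by
      rw [key, ← ha_def, hb_def]; ring
    have hzero : ∀ i, k + 1 ≤ i → c' i = 0 := by
      intro i hi
      have h1 : c (i - 1) = 0 := hc0 _ (by omega)
      have h2 : c i = 0 := hc0 _ (by omega)
      have hq0 : q ≠ 0 := by
        rw [hqe]; exact pow_ne_zero _ (Nat.Prime.ne_zero Fact.out)
      simp [hc'_def, if_neg (by omega : ¬ i = 0), h1, h2, zero_pow hq0]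
    have hne : ∃ i, c' i ≠ 0 := by
      classical
      obtain ⟨i₀, hi₀⟩ := hcne
      have hi₀k : i₀ < k := by
        by_contra h; exact hi₀ (hc0 i₀ (by omega))
      set F : Finset ℕ := (Finset.range k).filter (fun i => c i ≠ 0) with hF
      have hFne : F.Nonempty := ⟨i₀, by simp [hF, hi₀k, hi₀]⟩
      set i₁ := F.max' hFne with hi₁
      have hc₁ : c i₁ ≠ 0 := by
        have := F.max'_mem hFne
        simp only [hF, Finset.mem_filter] at this
        exact this.2
      have hc₂ : c (i₁ + 1) = 0 := by
        by_cases h : i₁ + 1 < k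
        · by_contra hne
          have : i₁ + 1 ∈ F := by simp [hF, h, hne]
          have := Finset.le_max' F _ this
          omega
        · exact hc0 _ (by omega)
      refine ⟨i₁ + 1, ?_⟩
      simp only [hc'_def, if_neg (Nat.succ_ne_zero i₁), Nat.add_sub_cancel, hc₂, mul_zero,
        add_zero]
      exact mul_ne_zero ha (pow_ne_zero _ hc₁)
    exact ⟨c', hzero, hne, hβ, hroots⟩

lemma Esum_steps (p : ℕ) [Fact p.Prime] [CharP K p] (e : ℕ) (q : ℕ) (hqe : q = p ^ e)
    (d : ℕ → ℕ) (hd : ∀ i, d (i + 1) = q * d i + 1) :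
    ∀ (T : List K) (k : ℕ) (c : ℕ → K), (∀ i, k ≤ i → c i = 0) → (∃ i, c i ≠ 0) →
    ∃ c' : ℕ → K, (∀ i, k + T.length ≤ i → c' i = 0) ∧ (∃ i, c' i ≠ 0) ∧
      (∀ x ∈ T, Esum d (k + T.length) c' x = 0) ∧
      (∀ x : K, Esum d k c x = 0 → Esum d (k + T.length) c' x = 0) := by
  intro T
  induction T with
  | nil =>
      intro k c hc0 hcne
      exact ⟨c, by simpa using hc0, hcne, by simp, by simpa using fun x h => h⟩
  | cons β T ih =>
      intro k c hc0 hcne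
      obtain ⟨c₁, h₁0, h₁ne, h₁β, h₁pres⟩ := Esum_step p e q hqe d hd k c hc0 hcne β
      obtain ⟨c', h'0, h'ne, h'T, h'pres⟩ := ih (k + 1) c₁ h₁0 h₁ne
      have hlen : k + 1 + T.length = k + (β :: T).length := by simp; omega
      refine ⟨c', by rw [← hlen]; exact h'0, h'ne, ?_, ?_⟩
      · intro x hx
        rcases List.mem_cons.mp hx with hx | hx
        · rw [← hlen, hx]; exact h'pres β h₁β
        · rw [← hlen]; exact h'T x hx
      · intro x hx
        rw [← hlen]
        exact h'pres x (h₁pres x hx)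

end Aux

/-- Every subset of a P-independent subset of `F_{q^m}` is P-independent: if the
σ-Vandermonde matrix of `α_1, …, α_s` (entry `(i,j)` equal to the truncated norm
`N_{i−1}(α_j) = α_j^{(q^{i−1}−1)/(q−1)}`) is invertible, then so is the σ-Vandermonde
matrix of any subfamily `α_{γ(1)}, …, α_{γ(r)}` (with `γ` injective). -/
theorem subset_of_Pindependent_is_Pindependent
    (q m s : ℕ) (Fq K : Type*) [Field Fq] [Fintype Fq] (hq : Fintype.card Fq = q)
    [Field K] [Algebra Fq K] (hm : Module.finrank Fq K = m) (hm1 : 1 ≤ m)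
    (α : Fin s → K)
    (hV : IsUnit (Matrix.of fun i j : Fin s =>
      α j ^ ((q ^ (i : ℕ) - 1) / (q - 1))).det)
    (r : ℕ) (γ : Fin r → Fin s) (hγ : Function.Injective γ) :
    IsUnit (Matrix.of fun i j : Fin r =>
      α (γ j) ^ ((q ^ (i : ℕ) - 1) / (q - 1))).det := by
  classical
  -- basic facts about q
  have hq2 : 2 ≤ q := hq ▸ Fintype.one_lt_card
  set p : ℕ := ringChar Fq with hp_def
  haveI : CharP Fq p := ringChar.charP Fq
  have hp : p.Prime := CharP.char_is_prime Fq p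
  haveI : Fact p.Prime := ⟨hp⟩
  obtain ⟨n, -, hcard⟩ := FiniteField.card Fq p
  have hqe : q = p ^ (n : ℕ) := by rw [← hq, hcard]
  haveI : CharP K p := charP_of_injective_algebraMap (algebraMap Fq K).injective p
  -- the exponent sequence
  set d : ℕ → ℕ := fun i => (q ^ i - 1) / (q - 1) with hd_def
  have hgeom : ∀ i, q ^ i = (q - 1) * (∑ j ∈ Finset.range i, q ^ j) + 1 := by
    intro i
    induction i with
    | zero => simp
    | succ n ih =>
        rw [Finset.sum_range_succ, Nat.mul_add, pow_succ]
        have h1 : 1 ≤ q ^ n := Nat.one_le_pow _ _ (by omega)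
        have h2 : (q - 1) * q ^ n + q ^ n = q ^ n * q := by
          have : (q - 1) + 1 = q := by omega
          calc (q - 1) * q ^ n + q ^ n = ((q - 1) + 1) * q ^ n := by ring
          _ = q ^ n * q := by rw [this]; ring
        omega
  have hdsum : ∀ i, d i = ∑ j ∈ Finset.range i, q ^ j := by
    intro i
    have h := hgeom i
    have : q ^ i - 1 = (q - 1) * (∑ j ∈ Finset.range i, q ^ j) := by omega
    rw [hd_def]
    simp only [this]
    exact Nat.mul_div_cancel_left _ (by omega)
  have hd : ∀ i, d (i + 1) = q * d i + 1 := by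
    intro i
    rw [hdsum, hdsum, Finset.sum_range_succ', Finset.mul_sum]
    simp [pow_succ, mul_comm]
  -- contradiction setup
  rw [isUnit_iff_ne_zero]
  intro hdet
  obtain ⟨v, hv, hvM⟩ := Matrix.exists_vecMul_eq_zero_iff.mpr hdet
  -- initial coefficient vector
  set c : ℕ → K := fun i => if h : i < r then v ⟨i, h⟩ else 0 with hc_def
  have hc0 : ∀ i, r ≤ i → c i = 0 := fun i hi => dif_neg (by omega)
  have hcne : ∃ i, c i ≠ 0 := by
    have : ∃ j, v j ≠ 0 := by
      by_contra h
      push_neg at h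
      exact hv (funext h)
    obtain ⟨j, hj⟩ := this
    exact ⟨j, by simpa [hc_def, j.isLt] using hj⟩
  have hEfin : ∀ (k : ℕ) (c : ℕ → K) (x : K),
      Esum d k c x = ∑ i : Fin k, c i * x ^ d i := by
    intro k c x
    rw [Esum, ← Fin.sum_univ_eq_sum_range (fun i => c i * x ^ d i) k]
  have hroots : ∀ j : Fin r, Esum d r c (α (γ j)) = 0 := by
    intro j
    have := congrFun hvM j
    rw [hEfin]
    simp only [Matrix.vecMul, dotProduct, Matrix.of_apply, Pi.zero_apply] at this
    rw [← this]
    refine Finset.sum_congr rfl fun i _ => ?_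
    simp [hc_def, i.isLt, hd_def]
  -- the extra points
  set Sγ : Finset (Fin s) := Finset.image γ Finset.univ with hSγ
  set T : List K := Sγᶜ.toList.map α with hT
  have hrs : r ≤ s := by simpa using Fintype.card_le_of_injective γ hγ
  have hTlen : r + T.length = s := by
    rw [hT, List.length_map, Finset.length_toList, Finset.card_compl, hSγ,
      Finset.card_image_of_injective _ hγ]
    simp; omega
  obtain ⟨c', h'0, h'ne, h'T, h'pres⟩ :=
    Esum_steps p (n : ℕ) q hqe d hd T r c hc0 hcne
  rw [hTlen] at h'0 h'T h'pres
  -- all α j are roots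
  have hall : ∀ j : Fin s, Esum d s c' (α j) = 0 := by
    intro j
    by_cases hj : j ∈ Sγ
    · obtain ⟨i, _, hi⟩ := Finset.mem_image.mp hj
      exact hi ▸ h'pres (α (γ i)) (hroots i)
    · refine h'T (α j) ?_
      rw [hT]
      exact List.mem_map_of_mem (f := α) (by rwa [Finset.mem_toList, Finset.mem_compl])
  -- build kernel vector for the big matrix
  set w : Fin s → K := fun i => c' i with hw
  have hwne : w ≠ 0 := by
    obtain ⟨i, hi⟩ := h'ne
    have his : i < s := by
      by_contra h
      exact hi (h'0 i (by omega))
    intro h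
    exact hi (congrFun h ⟨i, his⟩)
  have hwM : Matrix.vecMul w
      (Matrix.of fun i j : Fin s => α j ^ ((q ^ (i : ℕ) - 1) / (q - 1))) = 0 := by
    funext j
    have := hall j
    rw [hEfin] at this
    simp only [Matrix.vecMul, dotProduct, Matrix.of_apply, Pi.zero_apply]
    rw [← this]
  have : (Matrix.of fun i j : Fin s => α j ^ ((q ^ (i : ℕ) - 1) / (q - 1))).det = 0 :=
    Matrix.exists_vecMul_eq_zero_iff.mp ⟨w, hwne, hwM⟩
  rw [this] at hV
  exact (isUnit_iff_ne_zero.mp hV) rfl
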